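/- For any asynchronous morphism η : TR(Σ̃) → T₁ ≀ T₂ with η(t) = (π₁(t), π₂(t)), initial state s_in in the global states of T₁, associated asynchronous morphism φ(a) = (first component of η(a)), asynchronous automaton A = A_φ with initial state s_in, local transducer χ_A, and induced asynchronous morphism ψ : TR(Σ̃^{∥S}) → T₂ defined by ψ((a, s_a)) = f_a(s_a): for every trace t ∈ TR(Σ̃), π₂(t)(s_in) = ψ(χ_A(t)). -/

import Mathlib

/-- The trace congruence. -/
def traceCon {ι A : Type} (loc : A → Finset ι) : Con (FreeMonoid A) :=
  conGen (fun x y => ∃ a b, Disjoint (loc a) (loc b) ∧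
    x = FreeMonoid.of a * FreeMonoid.of b ∧ y = FreeMonoid.of b * FreeMonoid.of a)

/-- The extended alphabet `Σ^{∥S}`. -/
def ExtLetter {ι : Type} (A : Type) (loc : A → Finset ι) (S : ι → Type) : Type :=
  (a : A) × (∀ i : {x // x ∈ loc a}, S i.1)

def locE {ι A : Type} (loc : A → Finset ι) {S : ι → Type} :
    ExtLetter A loc S → Finset ι := fun e => loc e.1

/-- The word-level local asynchronous transducer. -/
def transduce {ι A : Type} (loc : A → Finset ι) {S : ι → Type}
    (Δ : A → (∀ i, S i) → (∀ i, S i)) :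
    (∀ i, S i) → List A → List (ExtLetter A loc S)
  | _, [] => []
  | s, a :: w => ⟨a, fun i => s i.1⟩ :: transduce loc Δ (Δ a s) w

/-- Wreath product multiplication (left-to-right). -/
def wMul {X Y : Type} (w₁ w₂ : (X → X) × (X → Y → Y)) :
    (X → X) × (X → Y → Y) :=
  (fun x => w₂.1 (w₁.1 x), fun x => (w₂.2 (w₁.1 x)) ∘ (w₁.2 x))

/-- for an asynchronous morphism `η = (π₁, π₂)` into `T₁ ≀ T₂`,
with associated automaton `A = A_φ` (where `φ(a) = π₁(of a)`), local transducer
`χ_A`, and induced asynchronous morphism `ψ` (with `ψ((a, s_a)) = f_a(s)`):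
for every trace `t`, `π₂(t)(s_in) = ψ(χ_A(t))`. -/
theorem second_component_via_transducer {ι A : Type} (loc : A → Finset ι)
    {S Q : ι → Type} [∀ i, Finite (S i)] [∀ i, Nonempty (S i)]
    [∀ i, Finite (Q i)] [∀ i, Nonempty (Q i)]
    (η : (traceCon loc).Quotient →
      ((∀ i, S i) → (∀ i, S i)) × ((∀ i, S i) → (∀ i, Q i) → (∀ i, Q i)))
    (hη1 : η 1 = (id, fun _ => id))
    (hηmul : ∀ u v, η (u * v) = wMul (η u) (η v))
    (s_in : ∀ i, S i)
    (χ : (traceCon loc).Quotient → (traceCon (locE loc)).Quotient)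
    (hχ : ∀ w : List A,
      χ ((traceCon loc).mk' (FreeMonoid.ofList w)) =
        (traceCon (locE loc)).mk' (FreeMonoid.ofList
          (transduce loc (fun a => (η ((traceCon loc).mk' (FreeMonoid.of a))).1)
            s_in w)))
    (ψ : (traceCon (locE loc)).Quotient → (∀ i, Q i) → (∀ i, Q i))
    (hψ1 : ψ 1 = id)
    (hψmul : ∀ u v, ψ (u * v) = ψ v ∘ ψ u)
    (hψof : ∀ (a : A) (s : ∀ i, S i),
      ψ ((traceCon (locE loc)).mk'
          (FreeMonoid.of (⟨a, fun i => s i.1⟩ : ExtLetter A loc S))) =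
        (η ((traceCon loc).mk' (FreeMonoid.of a))).2 s) :
    ∀ t : (traceCon loc).Quotient, (η t).2 s_in = ψ (χ t) := by
  have key : ∀ (w : List A) (s : ∀ i, S i),
      (η ((traceCon loc).mk' (FreeMonoid.ofList w))).2 s =
        ψ ((traceCon (locE loc)).mk' (FreeMonoid.ofList
          (transduce loc (fun a => (η ((traceCon loc).mk' (FreeMonoid.of a))).1)
            s w))) := by
    intro w
    induction w with
    | nil =>
        intro s
        simp only [transduce]
        have h1 : (FreeMonoid.ofList ([] : List A)) = (1 : FreeMonoid A) := rfl
        have h2 : (FreeMonoid.ofList ([] : List (ExtLetter A loc S))) =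
            (1 : FreeMonoid (ExtLetter A loc S)) := rfl
        rw [h1, h2, map_one, map_one, hη1, hψ1]
    | cons a w ih =>
        intro s
        have hsplit : (FreeMonoid.ofList (a :: w)) =
            FreeMonoid.of a * FreeMonoid.ofList w := rfl
        have hsplit2 : ∀ (e : ExtLetter A loc S) (l : List (ExtLetter A loc S)),
            FreeMonoid.ofList (e :: l) = FreeMonoid.of e * FreeMonoid.ofList l :=
          fun _ _ => rfl
        simp only [transduce, hsplit, map_mul, hηmul, hsplit2, hψmul, wMul]
        simp only [Function.comp_apply, ih, hψof]
        refine Eq.trans ?_ (congrArg (fun x => ψ ((traceCon (locE loc)).mk' x))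
          (hsplit2 ⟨a, fun i => s i.1⟩ _)).symm
        rw [map_mul, hψmul, hψof]
  intro t
  refine Quotient.inductionOn t fun w => ?_
  have h := key w s_in
  rw [← hχ w] at h
  exact h
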